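/- For every positive integer t there exists an integer N(t) such that every irreducible bipartite graph that contains no induced P_t, no induced K_{t-1,t}, and no induced T_t has at most N(t) vertices. Equivalently, for all positive integers i, j, k, there are (up to isomorphism) only finitely many irreducible graphs that are simultaneously P_i-free, K_{j,j}-free and T_k-free. -/

import Mathlib

open SimpleGraph

/-- `S` is an independent set in `G`: pairwise non-adjacent vertices. -/
def IndepOn {V : Type*} (G : SimpleGraph V) (S : Set V) : Prop :=
  S.Pairwise fun u v => ¬ G.Adj u v

/-- `NSet G U` is the set of vertices adjacent to at least one vertex of `U`. -/
def NSet {V : Type*} (G : SimpleGraph V) (U : Set V) : Set V :=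
  {v | ∃ u ∈ U, G.Adj u v}

/-- `(W, B)` is a bipartition of `G` into two independent parts covering all vertices. -/
def IsBipartition {V : Type*} (G : SimpleGraph V) (W B : Set V) : Prop :=
  W ∪ B = Set.univ ∧ Disjoint W B ∧ IndepOn G W ∧ IndepOn G B

/-- A bipartite graph `G` with parts `W` and `B` is irreducible if
(a) `|W| = |B| - 1`, (b) every nonempty `A ⊆ W` satisfies `|A| < |N(A) ∩ B|`,
and (c) `G` is connected. -/
def IrreducibleBip {V : Type*} (G : SimpleGraph V) (W B : Set V) : Prop :=
  IsBipartition G W B ∧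
  W.ncard + 1 = B.ncard ∧
  (∀ A ⊆ W, A.Nonempty → A.ncard < (NSet G A ∩ B).ncard) ∧
  G.Connected

/-- The simple tree `T_k`: the star `K_{1,k}` with each edge subdivided once.
Vertex `0` is the centre, vertices `1,…,k` are the subdivision vertices `a_i`,
and vertices `k+1,…,2k` are the leaves `b_i = i + k`. -/
def simpleTree (k : ℕ) : SimpleGraph (Fin (2 * k + 1)) :=
  SimpleGraph.fromRel fun i j =>
    (i.val = 0 ∧ 1 ≤ j.val ∧ j.val ≤ k) ∨ (1 ≤ i.val ∧ i.val ≤ k ∧ j.val = i.val + k)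

/-- The tree `S_{1,1,3}`: three leaves at distances 1, 1, 3 from the unique degree-3
vertex `0`. Edges: 0-1, 0-2, 0-3, 3-4, 4-5. -/
def S113 : SimpleGraph (Fin 6) :=
  SimpleGraph.fromRel fun i j =>
    (i = 0 ∧ j = 1) ∨ (i = 0 ∧ j = 2) ∨ (i = 0 ∧ j = 3) ∨ (i = 3 ∧ j = 4) ∨ (i = 4 ∧ j = 5)

/-- The claw `K_{1,3}`-freeness. -/
def ClawFree {V : Type*} (G : SimpleGraph V) : Prop :=
  IsEmpty (completeBipartiteGraph (Fin 1) (Fin 3) ↪g G)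

/-- For every `t ≥ 1` there is a bound `N(t)` such that every irreducible bipartite
graph with no induced `P_t`, no induced `K_{t-1,t}` and no induced `T_t` has at most
`N(t)` vertices. Equivalently, for all `i, j, k ≥ 1` there is a uniform bound on the
number of vertices of irreducible `(P_i, K_{j,j}, T_k)`-free graphs, so there are only
finitely many of them up to isomorphism. -/
lemma sparse_indep {α : Type*} [DecidableEq α] (Rel : α → α → Prop) [DecidableRel Rel]
    (m : ℕ) (P : Finset α) (h : ∀ p ∈ P, (P.filter (Rel p)).card < m) :
    ∃ S ⊆ P, (∀ x ∈ S, ∀ y ∈ S, x ≠ y → ¬ Rel x y) ∧ P.card ≤ 2 * m * S.card := by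
  induction P using Finset.strongInduction with
  | _ P ih =>
    rcases P.eq_empty_or_nonempty with rfl | hne
    · exact ⟨∅, by simp⟩
    · have hm : 1 ≤ m := by
        obtain ⟨p, hp⟩ := hne
        have := h p hp
        omega
      have hdbl : ∑ p ∈ P, (P.filter (Rel p)).card
          = ∑ q ∈ P, (P.filter (fun p => Rel p q)).card := by
        simp only [Finset.card_filter]
        rw [Finset.sum_comm]
      have hsum : ∑ q ∈ P, ((P.filter (Rel q)).card + (P.filter (fun p => Rel p q)).card)
          ≤ ∑ _q ∈ P, (2 * (m - 1)) := by
        rw [Finset.sum_add_distrib, ← hdbl, Finset.sum_const, smul_eq_mul]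
        have h1 : ∑ p ∈ P, (P.filter (Rel p)).card ≤ P.card * (m-1) := by
          calc ∑ p ∈ P, (P.filter (Rel p)).card ≤ ∑ _p ∈ P, (m-1) :=
            Finset.sum_le_sum (fun p hp => by have := h p hp; omega)
          _ = P.card * (m-1) := by rw [Finset.sum_const, smul_eq_mul]
        have h2 : P.card * (2*(m-1)) = P.card*(m-1) + P.card*(m-1) := by ring
        omega
      obtain ⟨q₀, hq₀, hdq⟩ := Finset.exists_le_of_sum_le hne hsum
      set R : Finset α := insert q₀ ((P.filter (Rel q₀)) ∪ (P.filter (fun p => Rel p q₀))) with hR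
      have hRP : R ⊆ P := by
        rw [hR]
        exact Finset.insert_subset hq₀
          (Finset.union_subset (Finset.filter_subset _ _) (Finset.filter_subset _ _))
      have hRcard : R.card ≤ 2 * m - 1 := by
        calc R.card ≤ ((P.filter (Rel q₀)) ∪ (P.filter (fun p => Rel p q₀))).card + 1 :=
          Finset.card_insert_le _ _
        _ ≤ (P.filter (Rel q₀)).card + (P.filter (fun p => Rel p q₀)).card + 1 := by
            have := Finset.card_union_le (P.filter (Rel q₀)) (P.filter (fun p => Rel p q₀))
            omega
        _ ≤ 2 * m - 1 := by omega
      have hPP : (P \ R) ⊂ P := Finset.sdiff_ssubset hRP ⟨q₀, by simp [hR]⟩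
      obtain ⟨S', hS'sub, hS'ind, hS'card⟩ := ih (P \ R) hPP
        (fun p hp => lt_of_le_of_lt
          (Finset.card_le_card (Finset.filter_subset_filter _ (Finset.sdiff_subset)))
          (h p (Finset.mem_sdiff.mp hp).1))
      have hq₀S' : q₀ ∉ S' := by
        intro hq
        have := hS'sub hq
        simp [hR] at this
      refine ⟨insert q₀ S', ?_, ?_, ?_⟩
      · intro x hx
        rcases Finset.mem_insert.mp hx with rfl | hx
        · exact hq₀
        · exact (Finset.mem_sdiff.mp (hS'sub hx)).1
      · intro x hx y hy hxy
        rcases Finset.mem_insert.mp hx with hx1 | hx2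
        · rcases Finset.mem_insert.mp hy with hy1 | hy2
          · exact absurd (hx1.trans hy1.symm) hxy
          · intro hrel
            have hyP := Finset.mem_sdiff.mp (hS'sub hy2)
            rw [hx1] at hrel
            exact hyP.2 (by simp [hR, Finset.mem_filter, hyP.1, hrel])
        · rcases Finset.mem_insert.mp hy with hy1 | hy2
          · intro hrel
            have hxP := Finset.mem_sdiff.mp (hS'sub hx2)
            rw [hy1] at hrel
            exact hxP.2 (by simp [hR, Finset.mem_filter, hxP.1, hrel])
          · exact hS'ind x hx2 y hy2 hxy
      · have hcard2 : P.card ≤ (P \ R).card + R.card := by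
          have hsub : P ⊆ (P \ R) ∪ R := fun p hp => by
            by_cases hpR : p ∈ R
            · exact Finset.mem_union_right _ hpR
            · exact Finset.mem_union_left _ (Finset.mem_sdiff.mpr ⟨hp, hpR⟩)
          calc P.card ≤ ((P \ R) ∪ R).card := Finset.card_le_card hsub
          _ ≤ _ := Finset.card_union_le _ _
        have hins : (insert q₀ S').card = S'.card + 1 := Finset.card_insert_of_notMem hq₀S'
        have h2 : 2*m*(insert q₀ S').card = 2*m*S'.card + 2*m := by rw [hins]; ring
        omega


lemma simpleTree_adj (k : ℕ) : ∀ u v : Fin (2*k+1), (simpleTree k).Adj u v ↔ (u ≠ v) ∧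
    (((u : ℕ) = 0 ∧ 1 ≤ (v : ℕ) ∧ (v : ℕ) ≤ k) ∨
     (1 ≤ (u : ℕ) ∧ (u : ℕ) ≤ k ∧ (v : ℕ) = (u : ℕ) + k) ∨
     ((v : ℕ) = 0 ∧ 1 ≤ (u : ℕ) ∧ (u : ℕ) ≤ k) ∨
     (1 ≤ (v : ℕ) ∧ (v : ℕ) ≤ k ∧ (u : ℕ) = (v : ℕ) + k)) := by
  intro u v
  rw [simpleTree, SimpleGraph.fromRel_adj]
  tauto

def gfun (b k : ℕ) : ℕ → ℕ
  | 0 => b + 2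
  | (n+1) => 2 * (gfun b k n) * k + 2*b + 2*k + 4

lemma gfun_ge (b k n : ℕ) : b + 2 ≤ gfun b k n := by
  cases n with
  | zero => simp [gfun]
  | succ n => simp only [gfun]; omega

lemma configA
    {V : Type} [Fintype V] [DecidableEq V]
    {G : SimpleGraph V} [DecidableRel G.Adj] {W B : Set V}
    (hWB : W ∪ B = Set.univ) (hdisj : Disjoint W B)
    (hIW : IndepOn G W) (hIB : IndepOn G B)
    (hcard : W.ncard + 1 = B.ncard)
    (hsur : ∀ A ⊆ W, A.Nonempty → A.ncard < (NSet G A ∩ B).ncard)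
    {b k : ℕ} (hk : 1 ≤ k)
    (hK : IsEmpty (completeBipartiteGraph (Fin b) (Fin b) ↪g G))
    (hT : IsEmpty (simpleTree k ↪g G)) :
    ∀ n (X Y : Finset V), X.Nonempty → X.card + n = b →
      ((X : Set V) ⊆ W ∨ (X : Set V) ⊆ B) →
      (∀ y ∈ Y, ∀ x ∈ X, G.Adj x y) → Y.card < gfun b k n := by
  have hside : ∀ v : V, v ∈ W ∨ v ∈ B := fun v => by
    have : v ∈ W ∪ B := hWB ▸ Set.mem_univ v
    exact this
  have hnadjW : ∀ {u v : V}, u ∈ W → v ∈ W → ¬G.Adj u v := fun hu hv h =>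
    hIW hu hv (G.ne_of_adj h) h
  have hnadjB : ∀ {u v : V}, u ∈ B → v ∈ B → ¬G.Adj u v := fun hu hv h =>
    hIB hu hv (G.ne_of_adj h) h
  have hWtoB : ∀ {u v : V}, G.Adj u v → u ∈ W → v ∈ B := fun h hu =>
    (hside _).resolve_left (fun hv => hnadjW hu hv h)
  have hBtoW : ∀ {u v : V}, G.Adj u v → u ∈ B → v ∈ W := fun h hu =>
    (hside _).resolve_right (fun hv => hnadjB hu hv h)
  intro n
  induction n with
  | zero =>
    intro X Y hXne hXcard hXside hadj
    by_contra hY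
    push_neg at hY
    have hYb : b + 2 ≤ Y.card := le_trans (le_of_eq rfl) hY
    obtain ⟨x₀, hx₀⟩ := hXne
    -- X and Y independent, disjoint
    have hXind : ∀ x ∈ X, ∀ x' ∈ X, ¬ G.Adj x x' := by
      rcases hXside with h | h
      · exact fun x hx x' hx' => hnadjW (h hx) (h hx')
      · exact fun x hx x' hx' => hnadjB (h hx) (h hx')
    have hYind : ∀ y ∈ Y, ∀ y' ∈ Y, ¬ G.Adj y y' := by
      rcases hXside with h | h
      · exact fun y hy y' hy' =>
          hnadjB (hWtoB (hadj y hy x₀ hx₀) (h hx₀)) (hWtoB (hadj y' hy' x₀ hx₀) (h hx₀))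
      · exact fun y hy y' hy' =>
          hnadjW (hBtoW (hadj y hy x₀ hx₀) (h hx₀)) (hBtoW (hadj y' hy' x₀ hx₀) (h hx₀))
    have hXYd : ∀ x ∈ X, ∀ y ∈ Y, x ≠ y := fun x hx y hy =>
      G.ne_of_adj (hadj y hy x hx)
    simp only [Nat.add_zero] at hXcard
    obtain ⟨Y', hY'sub, hY'card⟩ := Finset.exists_subset_card_eq (show b ≤ Y.card by omega)
    have eX : {x // x ∈ X} ≃ Fin b := Fintype.equivFinOfCardEq (by rw [Fintype.card_coe, hXcard])
    have eY : {y // y ∈ Y'} ≃ Fin b := Fintype.equivFinOfCardEq (by rw [Fintype.card_coe, hY'card])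
    set fX : Fin b → V := fun i => (eX.symm i : V) with hfX
    set fY : Fin b → V := fun i => (eY.symm i : V) with hfY
    have hfXm : ∀ i, fX i ∈ X := fun i => (eX.symm i).2
    have hfYm : ∀ i, fY i ∈ Y := fun i => hY'sub (eY.symm i).2
    have hfXinj : Function.Injective fX := fun i j hij => by
      have := Subtype.coe_injective hij
      simpa using congrArg eX this
    have hfYinj : Function.Injective fY := fun i j hij => by
      have := Subtype.coe_injective hij
      simpa using congrArg eY this
    have emb : completeBipartiteGraph (Fin b) (Fin b) ↪g G := by
      refine ⟨⟨Sum.elim fX fY, show Function.Injective (Sum.elim fX fY) from ?_⟩, ?_⟩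
      · rintro (i | i) (j | j) hij
        · simp only [Sum.elim_inl] at hij
          exact congrArg Sum.inl (hfXinj hij)
        · exact absurd hij (hXYd _ (hfXm i) _ (hfYm j))
        · exact absurd hij.symm (hXYd _ (hfXm j) _ (hfYm i))
        · simp only [Sum.elim_inr] at hij
          exact congrArg Sum.inr (hfYinj hij)
      · rintro (i | i) (j | j)
        · simpa using hXind _ (hfXm i) _ (hfXm j)
        · simpa using hadj _ (hfYm j) _ (hfXm i)
        · simpa using (hadj _ (hfYm i) _ (hfXm j)).symm
        · simpa using hYind _ (hfYm i) _ (hfYm j)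
    exact hK.false emb
  | succ n ih =>
    intro X Y hXne hXcard hXside hadj
    by_contra hYbig
    push_neg at hYbig
    set m := gfun b k n with hm
    have hmb : b + 2 ≤ m := gfun_ge b k n
    have hYbig' : 2*m*k + 2*b + 2*k + 4 ≤ Y.card := by
      have : gfun b k (n+1) = 2*m*k + 2*b + 2*k + 4 := rfl
      omega
    obtain ⟨x₀, hx₀⟩ := hXne
    -- a vertex adjacent to something in Y, not in X, is on X's side
    have hcside : ∀ c, (∃ y ∈ Y, G.Adj c y) →
        (((X : Set V) ⊆ W → c ∈ W) ∧ ((X : Set V) ⊆ B → c ∈ B)) := by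
      rintro c ⟨y, hy, hcy⟩
      constructor
      · intro hXW
        have hyB : y ∈ B := hWtoB (hadj y hy x₀ hx₀) (hXW hx₀)
        exact hBtoW hcy.symm hyB
      · intro hXB
        have hyW : y ∈ W := hBtoW (hadj y hy x₀ hx₀) (hXB hx₀)
        exact hWtoB hcy.symm hyW
    by_cases hdesc : ∃ c, c ∉ X ∧ m ≤ (Y.filter (fun y => G.Adj c y)).card
    · obtain ⟨c, hcX, hcY⟩ := hdesc
      set Y' := Y.filter (fun y => G.Adj c y) with hY'
      have hY'ne : Y'.Nonempty := Finset.card_pos.mp (by omega)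
      obtain ⟨y₁, hy₁⟩ := hY'ne
      have hy₁' := Finset.mem_filter.mp hy₁
      have hcs := hcside c ⟨y₁, hy₁'.1, hy₁'.2⟩
      have hins : (insert c X).card = X.card + 1 := Finset.card_insert_of_notMem hcX
      have := ih (insert c X) Y' ⟨c, Finset.mem_insert_self c X⟩
        (by omega)
        (by
          rcases hXside with h | h
          · left
            intro z hz
            rcases Finset.mem_insert.mp (by exact_mod_cast hz) with rfl | hzX
            · exact hcs.1 h
            · exact h hzX
          · right
            intro z hz
            rcases Finset.mem_insert.mp (by exact_mod_cast hz) with rfl | hzX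
            · exact hcs.2 h
            · exact h hzX)
        (by
          intro y hy x hx
          have hyf := Finset.mem_filter.mp hy
          rcases Finset.mem_insert.mp hx with rfl | hxX
          · exact hyf.2.symm.symm
          · exact hadj y hyf.1 x hxX)
      omega
    · push_neg at hdesc
      -- vertices of Y all of whose neighbours lie in X
      set Bad := Y.filter (fun y => ∀ c, G.Adj y c → c ∈ X) with hBadDef
      have hBadY : Bad ⊆ Y := Finset.filter_subset _ _
      have hBadcard : Bad.card ≤ b := by
        rcases hXside with hXW | hXB
        · -- X ⊆ W, so Y ⊆ B
          have hYB : ∀ y ∈ Y, y ∈ B := fun y hy => hWtoB (hadj y hy x₀ hx₀) (hXW hx₀)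
          by_cases hWX : W ⊆ (X : Set V)
          · exfalso
            have h1 : (Y : Set V) ⊆ B := fun y hy => hYB y hy
            have h2 : Y.card ≤ B.ncard := by
              rw [← Set.ncard_coe_finset]
              exact Set.ncard_le_ncard h1 (Set.toFinite B)
            have h3 : W.ncard ≤ X.card := by
              rw [← Set.ncard_coe_finset]
              exact Set.ncard_le_ncard hWX (Set.toFinite _)
            omega
          · have hA : (W \ (X : Set V)).Nonempty := Set.diff_nonempty.mpr hWX
            have hsA := hsur (W \ (X : Set V)) Set.diff_subset hA
            have hsub : NSet G (W \ (X : Set V)) ∩ B ⊆ B \ (Bad : Set V) := by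
              rintro z ⟨⟨u, hu, huz⟩, hzB⟩
              refine ⟨hzB, ?_⟩
              intro hzBad
              have hz2 := (Finset.mem_filter.mp hzBad).2
              exact hu.2 (hz2 u huz.symm)
            have h4 : (NSet G (W \ (X : Set V)) ∩ B).ncard ≤ (B \ (Bad : Set V)).ncard :=
              Set.ncard_le_ncard hsub (Set.toFinite _)
            have hBadB : (Bad : Set V) ⊆ B := fun y hy => hYB y (hBadY hy)
            have h5 : (B \ (Bad : Set V)).ncard + (Bad : Set V).ncard = B.ncard :=
              Set.ncard_diff_add_ncard_of_subset hBadB (Set.toFinite _)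
            have h6 : (W \ (X : Set V)).ncard + (X : Set V).ncard = W.ncard :=
              Set.ncard_diff_add_ncard_of_subset hXW (Set.toFinite _)
            rw [Set.ncard_coe_finset] at h5 h6
            omega
        · -- X ⊆ B, so Y ⊆ W
          rcases Bad.eq_empty_or_nonempty with hBe | hBne
          · simp [hBe]
          · have hBadW : (Bad : Set V) ⊆ W := fun y hy =>
              hBtoW (hadj y (hBadY hy) x₀ hx₀) (hXB hx₀)
            have hsB := hsur (Bad : Set V) hBadW (by exact_mod_cast hBne)
            have hsub : NSet G (Bad : Set V) ∩ B ⊆ (X : Set V) := by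
              rintro z ⟨⟨u, hu, huz⟩, hzB⟩
              have hu' := Finset.mem_filter.mp hu
              exact hu'.2 z huz
            have h4 := Set.ncard_le_ncard hsub (Set.toFinite _)
            rw [Set.ncard_coe_finset] at h4 hsB
            omega
      set Good := Y \ Bad with hGoodDef
      have hGoodY : Good ⊆ Y := Finset.sdiff_subset
      have hGoodcard : 2*m*k + 1 ≤ Good.card := by
        have h1 : Good.card + Bad.card = Y.card := Finset.card_sdiff_add_card_eq_card hBadY
        omega
      have hch : ∀ y ∈ Good, ∃ c, G.Adj y c ∧ c ∉ X := by
        intro y hy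
        have hyY : y ∈ Y := hGoodY hy
        have hyB : y ∉ Bad := (Finset.mem_sdiff.mp hy).2
        by_contra hno
        push_neg at hno
        exact hyB (Finset.mem_filter.mpr ⟨hyY, fun c hc => hno c hc⟩)
      set cf : V → V := fun y => if h : ∃ c, G.Adj y c ∧ c ∉ X then h.choose else y with hcf
      have hcf1 : ∀ y ∈ Good, G.Adj y (cf y) := by
        intro y hy
        rw [hcf]
        dsimp only
        rw [dif_pos (hch y hy)]
        exact (hch y hy).choose_spec.1
      have hcf2 : ∀ y ∈ Good, cf y ∉ X := by
        intro y hy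
        rw [hcf]
        dsimp only
        rw [dif_pos (hch y hy)]
        exact (hch y hy).choose_spec.2
      have hout : ∀ y ∈ Good, (Good.filter (fun y' => G.Adj (cf y) y')).card < m := by
        intro y hy
        exact lt_of_le_of_lt
          (Finset.card_le_card (Finset.filter_subset_filter _ hGoodY))
          (hdesc (cf y) (hcf2 y hy))
      obtain ⟨S, hSsub, hSind, hScard⟩ := sparse_indep (fun y y' => G.Adj (cf y) y') m Good hout
      have hSk : k ≤ S.card := by
        by_contra hSk'
        push_neg at hSk'
        have h1 : S.card ≤ k - 1 := by omega
        have h2 := Nat.mul_le_mul_left (2*m) h1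
        have h3 : 2*m*(k-1) + 2*m = 2*m*k := by
          have hk' : k - 1 + 1 = k := by omega
          calc 2*m*(k-1) + 2*m = 2*m*((k-1)+1) := by ring
          _ = 2*m*k := by rw [hk']
        omega
      obtain ⟨S', hS'sub, hS'card⟩ := Finset.exists_subset_card_eq hSk
      have eS : {y // y ∈ S'} ≃ Fin k := Fintype.equivFinOfCardEq (by rw [Fintype.card_coe, hS'card])
      set ya : Fin k → V := fun i => (eS.symm i : V) with hya
      have hyaS : ∀ i, ya i ∈ S := fun i => hS'sub (eS.symm i).2
      have hyaG : ∀ i, ya i ∈ Good := fun i => hSsub (hyaS i)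
      have hyaY : ∀ i, ya i ∈ Y := fun i => hGoodY (hyaG i)
      have hyainj : Function.Injective ya := fun i j hij => by
        have := Subtype.coe_injective hij
        simpa using congrArg eS this
      set ca : Fin k → V := fun i => cf (ya i) with hca
      have F1 : ∀ i, G.Adj x₀ (ya i) := fun i => hadj _ (hyaY i) _ hx₀
      have F2 : ∀ i, G.Adj (ya i) (ca i) := fun i => hcf1 _ (hyaG i)
      have F3 : ∀ i j, i ≠ j → ¬ G.Adj (ca i) (ya j) := fun i j hij =>
        hSind _ (hyaS i) _ (hyaS j) (fun h => hij (hyainj h))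
      have hcaX : ∀ i, ca i ∉ X := fun i => hcf2 _ (hyaG i)
      have hsides : ∀ i, ((X : Set V) ⊆ W → (ya i ∈ B ∧ ca i ∈ W)) ∧
          ((X : Set V) ⊆ B → (ya i ∈ W ∧ ca i ∈ B)) := by
        intro i
        constructor
        · intro hXW
          have h1 : ya i ∈ B := hWtoB (F1 i) (hXW hx₀)
          exact ⟨h1, hBtoW (F2 i) h1⟩
        · intro hXB
          have h1 : ya i ∈ W := hBtoW (F1 i) (hXB hx₀)
          exact ⟨h1, hWtoB (F2 i) h1⟩
      have F4 : ∀ i, ¬ G.Adj x₀ (ca i) := by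
        intro i
        rcases hXside with h | h
        · exact hnadjW (h hx₀) ((hsides i).1 h).2
        · exact hnadjB (h hx₀) ((hsides i).2 h).2
      have F5 : ∀ i j, ¬ G.Adj (ya i) (ya j) := by
        intro i j
        rcases hXside with h | h
        · exact hnadjB ((hsides i).1 h).1 ((hsides j).1 h).1
        · exact hnadjW ((hsides i).2 h).1 ((hsides j).2 h).1
      have F6 : ∀ i j, ¬ G.Adj (ca i) (ca j) := by
        intro i j
        rcases hXside with h | h
        · exact hnadjW ((hsides i).1 h).2 ((hsides j).1 h).2
        · exact hnadjB ((hsides i).2 h).2 ((hsides j).2 h).2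
      have F7 : ∀ i j, ya i ≠ ca j := by
        intro i j he
        rcases hXside with h | h
        · exact Set.disjoint_left.mp hdisj ((hsides j).1 h).2 (he ▸ ((hsides i).1 h).1)
        · exact Set.disjoint_left.mp hdisj (he ▸ ((hsides i).2 h).1) ((hsides j).2 h).2
      have F8 : ∀ i, x₀ ≠ ya i := fun i => G.ne_of_adj (F1 i)
      have F9 : ∀ i, x₀ ≠ ca i := fun i he => hcaX i (he ▸ hx₀)
      have F10 : ∀ i j, i ≠ j → ca i ≠ ca j := fun i j hij he =>
        F3 i j hij (by rw [he]; exact (F2 j).symm)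
      -- build the embedding of the simple tree
      set f : Fin (2*k+1) → V := fun u =>
        if h0 : (u : ℕ) = 0 then x₀
        else if h1 : (u : ℕ) ≤ k then ya ⟨(u : ℕ) - 1, by omega⟩
        else ca ⟨(u : ℕ) - k - 1, by have := u.isLt; omega⟩ with hfdef
      have hfA : ∀ (u : Fin (2*k+1)), (u : ℕ) = 0 → f u = x₀ := by
        intro u h
        rw [hfdef]
        dsimp only
        rw [dif_pos h]
      have hfB : ∀ (u : Fin (2*k+1)) (h1 : 1 ≤ (u : ℕ)) (h2 : (u : ℕ) ≤ k),
          f u = ya ⟨(u : ℕ) - 1, by omega⟩ := by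
        intro u h1 h2
        rw [hfdef]
        dsimp only
        rw [dif_neg (by omega), dif_pos h2]
      have hfC : ∀ (u : Fin (2*k+1)) (h1 : k + 1 ≤ (u : ℕ)),
          f u = ca ⟨(u : ℕ) - k - 1, by have := u.isLt; omega⟩ := by
        intro u h1
        rw [hfdef]
        dsimp only
        rw [dif_neg (by omega), dif_neg (by omega)]
      have htri : ∀ u : Fin (2*k+1), (u : ℕ) = 0 ∨ (1 ≤ (u : ℕ) ∧ (u : ℕ) ≤ k) ∨
          (k+1 ≤ (u : ℕ) ∧ (u : ℕ) ≤ 2*k) := fun u => by have := u.isLt; omega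
      have hst := simpleTree_adj k
      have hne_of_val : ∀ u v : Fin (2*k+1), (u : ℕ) ≠ (v : ℕ) → u ≠ v := by
        intro u v h he
        exact h (congrArg Fin.val he)
      have hfinj : Function.Injective f := by
          intro u v huv
          rcases htri u with hu | hu | hu <;> rcases htri v with hv | hv | hv
          · exact Fin.ext (by omega)
          · rw [hfA u hu, hfB v hv.1 hv.2] at huv
            exact absurd huv (F8 _)
          · rw [hfA u hu, hfC v hv.1] at huv
            exact absurd huv (F9 _)
          · rw [hfB u hu.1 hu.2, hfA v hv] at huv
            exact absurd huv.symm (F8 _)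
          · rw [hfB u hu.1 hu.2, hfB v hv.1 hv.2] at huv
            have := hyainj huv
            have := congrArg Fin.val this
            simp only at this
            exact Fin.ext (by omega)
          · rw [hfB u hu.1 hu.2, hfC v hv.1] at huv
            exact absurd huv (F7 _ _)
          · rw [hfC u hu.1, hfA v hv] at huv
            exact absurd huv.symm (F9 _)
          · rw [hfC u hu.1, hfB v hv.1 hv.2] at huv
            exact absurd huv.symm (F7 _ _)
          · rw [hfC u hu.1, hfC v hv.1] at huv
            by_cases hij : (⟨(u : ℕ) - k - 1, by have := u.isLt; omega⟩ : Fin k)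
                = (⟨(v : ℕ) - k - 1, by have := v.isLt; omega⟩ : Fin k)
            · have := congrArg Fin.val hij
              simp only at this
              exact Fin.ext (by omega)
            · exact absurd huv (F10 _ _ hij)
      have emb : simpleTree k ↪g G := by
        refine ⟨⟨f, hfinj⟩, ?_⟩
        · -- adjacency
          intro u v
          simp only [Function.Embedding.coeFn_mk]
          rw [hst]
          rcases htri u with hu | hu | hu <;> rcases htri v with hv | hv | hv
          · rw [hfA u hu, hfA v hv]
            constructor
            · intro h
              exact absurd h (G.loopless.irrefl x₀)
            · rintro ⟨hne, -⟩
              exact absurd (Fin.ext (by omega)) hne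
          · rw [hfA u hu, hfB v hv.1 hv.2]
            constructor
            · intro _
              exact ⟨hne_of_val u v (by omega), Or.inl ⟨hu, hv.1, hv.2⟩⟩
            · intro _
              exact F1 _
          · rw [hfA u hu, hfC v hv.1]
            constructor
            · intro h
              exact absurd h (F4 _)
            · rintro ⟨-, h⟩
              exfalso
              rcases h with h|h|h|h <;> omega
          · rw [hfB u hu.1 hu.2, hfA v hv]
            constructor
            · intro _
              exact ⟨hne_of_val u v (by omega), Or.inr (Or.inr (Or.inl ⟨hv, hu.1, hu.2⟩))⟩
            · intro _
              exact (F1 _).symm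
          · rw [hfB u hu.1 hu.2, hfB v hv.1 hv.2]
            constructor
            · intro h
              exact absurd h (F5 _ _)
            · rintro ⟨-, h⟩
              exfalso
              rcases h with h|h|h|h <;> omega
          · -- mid, high : the matching edges
            rw [hfB u hu.1 hu.2, hfC v hv.1]
            constructor
            · intro h
              have hidx : (⟨(v : ℕ) - k - 1, by have := v.isLt; omega⟩ : Fin k)
                  = (⟨(u : ℕ) - 1, by omega⟩ : Fin k) := by
                by_contra hne
                exact F3 _ _ hne h.symm
              have := congrArg Fin.val hidx
              simp only at this
              refine ⟨hne_of_val u v (by omega), Or.inr (Or.inl ⟨hu.1, hu.2, by omega⟩)⟩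
            · rintro ⟨-, h⟩
              have hvu : (v : ℕ) = (u : ℕ) + k := by
                rcases h with h|h|h|h <;> omega
              have hmk : (⟨(v : ℕ) - k - 1, by have := v.isLt; omega⟩ : Fin k)
                  = (⟨(u : ℕ) - 1, by omega⟩ : Fin k) := by rw [Fin.mk.injEq]; omega
              rw [hmk]
              exact F2 _
          · rw [hfC u hu.1, hfA v hv]
            constructor
            · intro h
              exact absurd h.symm (F4 _)
            · rintro ⟨-, h⟩
              exfalso
              rcases h with h|h|h|h <;> omega
          · -- high, mid
            rw [hfC u hu.1, hfB v hv.1 hv.2]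
            constructor
            · intro h
              have hidx : (⟨(u : ℕ) - k - 1, by have := u.isLt; omega⟩ : Fin k)
                  = (⟨(v : ℕ) - 1, by omega⟩ : Fin k) := by
                by_contra hne
                exact F3 _ _ hne h
              have := congrArg Fin.val hidx
              simp only at this
              refine ⟨hne_of_val u v (by omega), Or.inr (Or.inr (Or.inr ⟨hv.1, hv.2, by omega⟩))⟩
            · rintro ⟨-, h⟩
              have hvu : (u : ℕ) = (v : ℕ) + k := by
                rcases h with h|h|h|h <;> omega
              have hmk : (⟨(u : ℕ) - k - 1, by have := u.isLt; omega⟩ : Fin k)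
                  = (⟨(v : ℕ) - 1, by omega⟩ : Fin k) := by rw [Fin.mk.injEq]; omega
              rw [hmk]
              exact (F2 _).symm
          · rw [hfC u hu.1, hfC v hv.1]
            constructor
            · intro h
              exact absurd h (F6 _ _)
            · rintro ⟨-, h⟩
              exfalso
              rcases h with h|h|h|h <;> omega
      exact hT.false emb


lemma exists_adj_dist {V : Type} (G : SimpleGraph V) (hconn : G.Connected) (x v : V) (s : ℕ)
    (h : G.dist x v = s + 1) : ∃ y, G.Adj x y ∧ G.dist y v = s := by
  obtain ⟨p, hp⟩ := (hconn x v).exists_walk_length_eq_dist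
  cases p with
  | nil =>
    rw [SimpleGraph.Walk.length_nil] at hp
    omega
  | @cons _ y _ hadj q =>
    refine ⟨y, hadj, ?_⟩
    rw [SimpleGraph.Walk.length_cons] at hp
    have h1 : G.dist y v ≤ q.length := SimpleGraph.dist_le q
    have h3 : G.dist x v ≤ G.dist x y + G.dist y v := hconn.dist_triangle
    have h4 : G.dist x y ≤ 1 := by
      have := SimpleGraph.dist_le (SimpleGraph.Walk.cons hadj SimpleGraph.Walk.nil)
      simpa using this
    omega

lemma dist_small {V : Type} (G : SimpleGraph V) (hconn : G.Connected) {a : ℕ} (ha : 1 ≤ a)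
    (hP : IsEmpty (pathGraph a ↪g G)) : ∀ u v : V, G.dist u v ≤ a - 2 := by
  classical
  intro u v
  by_contra hlt
  push_neg at hlt
  set d := G.dist u v with hd
  have hda : a - 1 ≤ d := by omega
  set seq : ℕ → V := fun i => Nat.rec u
    (fun _ x => if h : ∃ y, G.Adj x y ∧ G.dist y v = G.dist x v - 1 then h.choose else x) i
    with hseq
  have hsucc : ∀ i, seq (i+1) =
      if h : ∃ y, G.Adj (seq i) y ∧ G.dist y v = G.dist (seq i) v - 1 then h.choose
      else seq i := fun i => by rw [hseq]
  have key : ∀ i, i ≤ d → G.dist u (seq i) = i ∧ G.dist (seq i) v = d - i := by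
    intro i
    induction i with
    | zero =>
      intro _
      have h0 : seq 0 = u := by rw [hseq]; rfl
      constructor
      · rw [h0]
        exact SimpleGraph.dist_self
      · rw [h0]
        omega
    | succ i ih =>
      intro hi
      obtain ⟨k1, k2⟩ := ih (by omega)
      have hx : G.dist (seq i) v = (d - i - 1) + 1 := by omega
      obtain ⟨y, hy1, hy2⟩ := exists_adj_dist G hconn (seq i) v _ hx
      have hex : ∃ y, G.Adj (seq i) y ∧ G.dist y v = G.dist (seq i) v - 1 :=
        ⟨y, hy1, by omega⟩
      have hs1 : seq (i+1) = hex.choose := by rw [hsucc i, dif_pos hex]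
      obtain ⟨hc1, hc2⟩ := hex.choose_spec
      have hdist2 : G.dist (seq (i+1)) v = d - (i+1) := by
        rw [hs1]
        omega
      have hup : G.dist u (seq (i+1)) ≤ i + 1 := by
        have t1 : G.dist u (seq (i+1)) ≤ G.dist u (seq i) + G.dist (seq i) (seq (i+1)) :=
          hconn.dist_triangle
        have t2 : G.dist (seq i) (seq (i+1)) ≤ 1 := by
          have hadj : G.Adj (seq i) (seq (i+1)) := by rw [hs1]; exact hc1
          have := SimpleGraph.dist_le (SimpleGraph.Walk.cons hadj SimpleGraph.Walk.nil)
          simpa using this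
        omega
      have hlow : d ≤ G.dist u (seq (i+1)) + G.dist (seq (i+1)) v := hconn.dist_triangle
      constructor
      · omega
      · exact hdist2
  have hadjseq : ∀ i, i < d → G.Adj (seq i) (seq (i+1)) := by
    intro i hi
    obtain ⟨k1, k2⟩ := key i (by omega)
    have hx : G.dist (seq i) v = (d - i - 1) + 1 := by omega
    obtain ⟨y, hy1, hy2⟩ := exists_adj_dist G hconn (seq i) v _ hx
    have hex : ∃ y, G.Adj (seq i) y ∧ G.dist y v = G.dist (seq i) v - 1 :=
      ⟨y, hy1, by omega⟩
    have hs1 : seq (i+1) = hex.choose := by rw [hsucc i, dif_pos hex]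
    rw [hs1]
    exact hex.choose_spec.1
  -- build path embedding
  have hdistinct : ∀ i j : Fin a, seq i.val = seq j.val → i = j := by
    intro i j hij
    have h1 := (key i.val (by have := i.isLt; omega)).1
    have h2 := (key j.val (by have := j.isLt; omega)).1
    rw [hij] at h1
    exact Fin.ext (by omega)
  have emb : pathGraph a ↪g G := by
    refine ⟨⟨fun i => seq i.val, show Function.Injective (fun i : Fin a => seq i.val) from fun i j hij => hdistinct i j hij⟩, ?_⟩
    intro i j
    simp only [Function.Embedding.coeFn_mk]
    rw [pathGraph_adj]
    constructor
    · intro h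
      by_contra hne
      push_neg at hne
      rcases lt_trichotomy i.val j.val with hh | hh | hh
      · have hij2 : i.val + 2 ≤ j.val := by omega
        have t1 : G.dist u (seq j.val) ≤ G.dist u (seq i.val) + G.dist (seq i.val) (seq j.val) :=
          hconn.dist_triangle
        have t2 : G.dist (seq i.val) (seq j.val) ≤ 1 := by
          have := SimpleGraph.dist_le (SimpleGraph.Walk.cons h SimpleGraph.Walk.nil)
          simpa using this
        have h1 := (key i.val (by have := i.isLt; omega)).1
        have h2 := (key j.val (by have := j.isLt; omega)).1
        omega
      · exact G.loopless.irrefl _ (by rw [show i.val = j.val from hh] at h; exact h)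
      · have hij2 : j.val + 2 ≤ i.val := by omega
        have t1 : G.dist u (seq i.val) ≤ G.dist u (seq j.val) + G.dist (seq j.val) (seq i.val) :=
          hconn.dist_triangle
        have t2 : G.dist (seq j.val) (seq i.val) ≤ 1 := by
          have := SimpleGraph.dist_le (SimpleGraph.Walk.cons h.symm SimpleGraph.Walk.nil)
          simpa using this
        have h1 := (key i.val (by have := i.isLt; omega)).1
        have h2 := (key j.val (by have := j.isLt; omega)).1
        omega
    · intro h
      rcases h with h | h
      · have : i.val < d := by have := j.isLt; omega
        have := hadjseq i.val this
        rw [show j.val = i.val + 1 from h.symm] at *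
        convert this using 2
      · have : j.val < d := by have := i.isLt; omega
        have := hadjseq j.val this
        rw [show i.val = j.val + 1 from h.symm] at *
        exact this.symm
  exact hP.false emb

lemma card_le_of_deg_diam {V : Type} [Fintype V] [DecidableEq V] (G : SimpleGraph V)
    [DecidableRel G.Adj] (hconn : G.Connected) (D r : ℕ)
    (hD : ∀ v, (G.neighborFinset v).card < D) (hdiam : ∀ u v : V, G.dist u v ≤ r) :
    Fintype.card V ≤ D ^ r := by
  obtain ⟨v₀⟩ := hconn.nonempty
  set ball : ℕ → Finset V := fun n => Finset.univ.filter (fun x => G.dist v₀ x ≤ n) with hball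
  have hball0 : (ball 0).card ≤ 1 := by
    have hsub : ball 0 ⊆ {v₀} := by
      intro x hx
      rw [hball] at hx
      have hx' := (Finset.mem_filter.mp hx).2
      have : G.dist v₀ x = 0 := by omega
      rcases SimpleGraph.dist_eq_zero_iff_eq_or_not_reachable.mp this with h | h
      · simp [h]
      · exact absurd (hconn v₀ x) h
    simpa using Finset.card_le_card hsub
  have hstep : ∀ n, (ball (n+1)).card ≤ (ball n).card * D := by
    intro n
    have hsub : ball (n+1) ⊆ (ball n).biUnion (fun y => insert y (G.neighborFinset y)) := by
      intro x hx
      rw [hball] at hx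
      have hx' := (Finset.mem_filter.mp hx).2
      by_cases hn : G.dist v₀ x ≤ n
      · refine Finset.mem_biUnion.mpr ⟨x, ?_, Finset.mem_insert_self _ _⟩
        rw [hball]
        exact Finset.mem_filter.mpr ⟨Finset.mem_univ _, hn⟩
      · have hxd : G.dist x v₀ = n + 1 := by rw [SimpleGraph.dist_comm]; omega
        obtain ⟨y, hy1, hy2⟩ := exists_adj_dist G hconn x v₀ n hxd
        refine Finset.mem_biUnion.mpr ⟨y, ?_, ?_⟩
        · rw [hball]
          refine Finset.mem_filter.mpr ⟨Finset.mem_univ _, ?_⟩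
          rw [SimpleGraph.dist_comm]
          omega
        · exact Finset.mem_insert_of_mem ((SimpleGraph.mem_neighborFinset G y x).mpr hy1.symm)
    calc (ball (n+1)).card ≤ ((ball n).biUnion (fun y => insert y (G.neighborFinset y))).card :=
        Finset.card_le_card hsub
    _ ≤ ∑ y ∈ ball n, (insert y (G.neighborFinset y)).card := Finset.card_biUnion_le
    _ ≤ ∑ _y ∈ ball n, D := Finset.sum_le_sum (fun y _ => by
        have h1 := Finset.card_insert_le y (G.neighborFinset y)
        have h2 := hD y
        omega)
    _ = (ball n).card * D := by rw [Finset.sum_const, smul_eq_mul]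
  have hballn : ∀ n, (ball n).card ≤ D ^ n := by
    intro n
    induction n with
    | zero => simpa using hball0
    | succ n ih =>
      calc (ball (n+1)).card ≤ (ball n).card * D := hstep n
      _ ≤ D ^ n * D := Nat.mul_le_mul_right D ih
      _ = D ^ (n+1) := by ring
  have huniv : (Finset.univ : Finset V) ⊆ ball r := by
    intro x _
    rw [hball]
    exact Finset.mem_filter.mpr ⟨Finset.mem_univ _, hdiam v₀ x⟩
  calc Fintype.card V = (Finset.univ : Finset V).card := rfl
  _ ≤ (ball r).card := Finset.card_le_card huniv
  _ ≤ D ^ r := hballn r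


theorem mainBound (a b k : ℕ) (ha : 1 ≤ a) (hb : 1 ≤ b) (hk : 1 ≤ k)
    (V : Type) [Fintype V] (G : SimpleGraph V) (W B : Set V)
    (hirr : IrreducibleBip G W B)
    (hP : IsEmpty (pathGraph a ↪g G))
    (hK : IsEmpty (completeBipartiteGraph (Fin b) (Fin b) ↪g G))
    (hT : IsEmpty (simpleTree k ↪g G)) :
    Fintype.card V ≤ (gfun b k (b-1)) ^ a := by
  classical
  obtain ⟨⟨hWB, hdisj, hIW, hIB⟩, hcard, hsur, hconn⟩ := hirr
  set D := gfun b k (b-1) with hD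
  have hD1 : 1 ≤ D := by have := gfun_ge b k (b-1); omega
  have hdeg : ∀ v : V, (G.neighborFinset v).card < D := by
    intro v
    have hside : v ∈ W ∨ v ∈ B := by
      have : v ∈ W ∪ B := hWB ▸ Set.mem_univ v
      exact this
    refine configA hWB hdisj hIW hIB hcard hsur hk hK hT (b-1) {v} (G.neighborFinset v)
      ⟨v, Finset.mem_singleton_self v⟩ (by simp; omega) ?_ ?_
    · rcases hside with h | h
      · left
        intro z hz
        rw [Finset.coe_singleton, Set.mem_singleton_iff] at hz
        exact hz ▸ h
      · right
        intro z hz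
        rw [Finset.coe_singleton, Set.mem_singleton_iff] at hz
        exact hz ▸ h
    · intro y hy x hx
      rw [Finset.mem_singleton] at hx
      subst hx
      exact (SimpleGraph.mem_neighborFinset G x y).mp hy
  have hdist := dist_small G hconn ha hP
  have hcount := card_le_of_deg_diam G hconn D (a-2) hdeg hdist
  calc Fintype.card V ≤ D ^ (a-2) := hcount
  _ ≤ D ^ a := Nat.pow_le_pow_right hD1 (by omega)


theorem statement7 :
    (∀ t : ℕ, 1 ≤ t → ∃ N : ℕ,
      ∀ (V : Type) [Fintype V] (G : SimpleGraph V) (W B : Set V),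
        IrreducibleBip G W B →
        IsEmpty (pathGraph t ↪g G) →
        IsEmpty (completeBipartiteGraph (Fin (t - 1)) (Fin t) ↪g G) →
        IsEmpty (simpleTree t ↪g G) →
        Fintype.card V ≤ N) ∧
    (∀ i j k : ℕ, 1 ≤ i → 1 ≤ j → 1 ≤ k → ∃ N : ℕ,
      ∀ (V : Type) [Fintype V] (G : SimpleGraph V) (W B : Set V),
        IrreducibleBip G W B →
        IsEmpty (pathGraph i ↪g G) →
        IsEmpty (completeBipartiteGraph (Fin j) (Fin j) ↪g G) →
        IsEmpty (simpleTree k ↪g G) →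
        Fintype.card V ≤ N) := by
  constructor
  · intro t ht
    refine ⟨(gfun t t (t-1)) ^ t, ?_⟩
    intro V _ G W B hirr hP hK hT
    have emb2 : completeBipartiteGraph (Fin (t-1)) (Fin t) ↪g
        completeBipartiteGraph (Fin t) (Fin t) := by
      refine ⟨⟨Sum.map (Fin.castLE (by omega)) id,
        Function.Injective.sumMap (Fin.castLE_injective _) (fun x y h => h)⟩, ?_⟩
      rintro (i | i) (j | j) <;>
        simp [completeBipartiteGraph, Function.Embedding.coeFn_mk, Sum.map]
    have hK2 : IsEmpty (completeBipartiteGraph (Fin t) (Fin t) ↪g G) :=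
      ⟨fun e => hK.false (SimpleGraph.Embedding.comp e emb2)⟩
    exact mainBound t t t ht ht ht V G W B hirr hP hK2 hT
  · intro i j k hi hj hk
    exact ⟨(gfun j k (j-1)) ^ i, fun V _ G W B hirr hP hK hT =>
      mainBound i j k hi hj hk V G W B hirr hP hK hT⟩
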